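/- arXiv:2503.15347 — 2 statements merged into one kernel-verified Lean document; each statement's English description precedes it below -/
import Mathlib

section
/- Let X_n ∼ χ²_{α_n+α_0} and Y_n ∼ χ²_{β_n+β_0} be independent, where α_0,β_0∈ℝ and α_n,β_n>0 satisfy α_n→∞, β_n→∞ and α_n/β_n→∞. Then for every t=(t_1,t_2,t_3,t_4)∈ℝ³×(−∞,1), the scaled cumulant generating functions converge: (2/β_n)·log E[exp((β_n/2)(t_1(X_n−α_n)/√(α_nβ_n) + t_2 X_n/α_n + t_3 Y_n/√(α_nβ_n) + t_4 Y_n/β_n))] → (1/2)t_1² + t_2 − log(1−t_4) as n→∞ (the expectation being finite for all n large enough). -/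
open MeasureTheory ProbabilityTheory Filter Topology Polynomial
open scoped ENNReal NNReal

noncomputable section

/-- The chi-squared distribution with `r` degrees of freedom, as a measure on `ℝ`
(supported on `(0,∞)`). -/
def chiSq (r : ℝ) : Measure ℝ :=
  volume.withDensity (fun x => ENNReal.ofReal
    (if 0 < x then x ^ (r / 2 - 1) * Real.exp (-x / 2) / ((2 : ℝ) ^ (r / 2) * Real.Gamma (r / 2))
     else 0))

section AuxChiSq

open Real

lemma chiSq_eq_gamma (r : ℝ) : chiSq r = gammaMeasure (r/2) (1/2) := by
  unfold chiSq gammaMeasure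
  apply withDensity_congr_ae
  have h0 : (volume : Measure ℝ) {(0:ℝ)} = 0 := measure_singleton 0
  filter_upwards [compl_mem_ae_iff.mpr h0] with x hx
  replace hx : x ≠ 0 := hx
  rw [gammaPDF_eq]
  rcases lt_trichotomy x 0 with h | h | h
  · rw [if_neg (not_lt.mpr h.le), if_neg (not_le.mpr h)]
  · exact absurd h hx
  · rw [if_pos h, if_pos h.le]
    congr 1
    rw [Real.div_rpow zero_le_one (by norm_num), Real.one_rpow]
    have : Real.exp (-(1/2 * x)) = Real.exp (-x/2) := by ring_nf
    rw [this]
    field_simp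

lemma gamma_pdf_mul_exp_eq (a c s : ℝ) :
    (fun x => gammaPDFReal a c x * Real.exp (s * x)) =
      Set.indicator (Set.Ici 0)
        (fun x => c ^ a / Real.Gamma a * (x ^ (a-1) * Real.exp (-((c - s) * x)))) := by
  funext x
  rw [Set.indicator_apply, gammaPDFReal]
  by_cases h : (0:ℝ) ≤ x
  · rw [if_pos h, if_pos (Set.mem_Ici.mpr h), mul_assoc, mul_assoc]
    congr 1
    rw [← Real.exp_add]
    congr 1
    ring
  · rw [if_neg h, if_neg (fun hm => h (Set.mem_Ici.mp hm)), zero_mul]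

lemma integrable_pdf_mul_exp {a c s : ℝ} (ha : 0 < a) (hs : s < c) :
    Integrable (fun x => gammaPDFReal a c x * Real.exp (s * x)) volume := by
  rw [gamma_pdf_mul_exp_eq, integrable_indicator_iff measurableSet_Ici,
    integrableOn_Ici_iff_integrableOn_Ioi]
  apply Integrable.const_mul
  have h := integrableOn_rpow_mul_exp_neg_mul_rpow (s := a - 1) (p := 1) (b := c - s)
    (by linarith) one_pos (by linarith)
  refine h.congr_fun (fun x hx => ?_) measurableSet_Ioi
  simp only [Real.rpow_one]
  ring_nf

lemma gamma_integrable_exp {a c s : ℝ} (ha : 0 < a) (hc : 0 < c) (hs : s < c) :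
    Integrable (fun x => Real.exp (s * x)) (gammaMeasure a c) := by
  have hm := (measurable_gammaPDFReal a c).real_toNNReal
  have key : gammaMeasure a c =
      volume.withDensity (fun x => ((Real.toNNReal (gammaPDFReal a c x) : ℝ≥0) : ℝ≥0∞)) := rfl
  rw [key]
  refine (integrable_withDensity_iff_integrable_smul hm (g := fun x => Real.exp (s*x))).mpr ?_
  refine (integrable_pdf_mul_exp ha hs).congr (ae_of_all _ fun x => ?_)
  show gammaPDFReal a c x * Real.exp (s * x) = _ • _
  rw [NNReal.smul_def, smul_eq_mul, Real.coe_toNNReal _ (gammaPDFReal_nonneg ha hc x)]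

lemma gamma_integral_exp {a c s : ℝ} (ha : 0 < a) (hc : 0 < c) (hs : s < c) :
    ∫ x, Real.exp (s * x) ∂(gammaMeasure a c) = (c / (c - s)) ^ a := by
  have hm := (measurable_gammaPDFReal a c).real_toNNReal
  have key : gammaMeasure a c =
      volume.withDensity (fun x => ((Real.toNNReal (gammaPDFReal a c x) : ℝ≥0) : ℝ≥0∞)) := rfl
  rw [key, integral_withDensity_eq_integral_smul hm]
  have : (fun x => (Real.toNNReal (gammaPDFReal a c x)) • Real.exp (s * x)) =
      fun x => gammaPDFReal a c x * Real.exp (s * x) := by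
    funext x
    rw [NNReal.smul_def, smul_eq_mul, Real.coe_toNNReal _ (gammaPDFReal_nonneg ha hc x)]
  rw [this, gamma_pdf_mul_exp_eq, integral_indicator measurableSet_Ici,
    integral_Ici_eq_integral_Ioi, integral_const_mul,
    integral_rpow_mul_exp_neg_mul_Ioi ha (by linarith)]
  rw [div_rpow (by norm_num) (by linarith), one_rpow, div_rpow hc.le (by linarith)]
  field_simp

lemma chiSq_neZero {r : ℝ} (hr : 0 < r) : chiSq r ≠ 0 := by
  rw [chiSq_eq_gamma]
  have : IsProbabilityMeasure (gammaMeasure (r/2) (1/2)) :=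
    isProbabilityMeasure_gammaMeasure (by linarith) one_half_pos
  exact IsProbabilityMeasure.ne_zero _

lemma chiSq_integrable_exp {r s : ℝ} (hr : 0 < r) (hs : s < 1/2) :
    Integrable (fun x => Real.exp (s * x)) (chiSq r) := by
  rw [chiSq_eq_gamma]; exact gamma_integrable_exp (by linarith) one_half_pos hs

lemma chiSq_integral_exp {r s : ℝ} (hr : 0 < r) (hs : s < 1/2) :
    ∫ x, Real.exp (s * x) ∂(chiSq r) = (1 - 2*s) ^ (-(r/2)) := by
  rw [chiSq_eq_gamma, gamma_integral_exp (by linarith) one_half_pos hs]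
  have h1 : (0:ℝ) < 1 - 2*s := by linarith
  have h2 : (1/2 : ℝ) / (1/2 - s) = (1 - 2*s)⁻¹ := by
    rw [inv_eq_one_div, div_eq_div_iff (by linarith) (by linarith)]; ring
  rw [h2, Real.inv_rpow (by linarith), ← Real.rpow_neg (by linarith)]

lemma key_limit (t1 t2 : ℝ) :
    Tendsto (fun u : ℝ => -t1/u - (1/u^2) * Real.log (1 - (t1*u + t2*u^2)))
      (𝓝[>] (0:ℝ)) (𝓝 (t1^2/2 + t2)) := by
  set x : ℝ → ℝ := fun u => t1*u + t2*u^2 with hx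
  have hxc : Continuous x := by fun_prop
  have hx0 : Tendsto x (𝓝[>] 0) (𝓝 0) := by
    have := hxc.tendsto 0
    simp only [hx] at this ⊢
    simpa using this.mono_left nhdsWithin_le_nhds
  have hev : ∀ᶠ u in 𝓝[>] (0:ℝ), |x u| < 1/2 := by
    have := hx0.eventually (eventually_abs_sub_lt 0 (by norm_num : (0:ℝ) < 1/2))
    simpa using this
  have hupos : ∀ᶠ u in 𝓝[>] (0:ℝ), 0 < u := eventually_mem_nhdsWithin
  have hB : Tendsto (fun u => (x u + (x u)^2/2 + Real.log (1 - x u))/u^2) (𝓝[>] 0) (𝓝 0) := by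
    apply squeeze_zero_norm' (a := fun u => 2*|t1 + t2*u|^3 * |u|)
    · filter_upwards [hev, hupos] with u hu hu0
      have h1 : |x u| < 1 := by linarith [hu]
      have hb := Real.abs_log_sub_add_sum_range_le h1 2
      have hsum : (∑ i ∈ Finset.range 2, (x u) ^ (i + 1) / (i + 1)) = x u + (x u)^2/2 := by
        simp [Finset.sum_range_succ]
        ring
      rw [hsum] at hb
      have hden : (1:ℝ)/2 ≤ 1 - |x u| := by linarith
      have hb2 : |x u + (x u)^2/2 + Real.log (1 - x u)| ≤ 2 * |x u|^3 := by
        calc |x u + (x u)^2/2 + Real.log (1 - x u)| ≤ |x u|^3 / (1 - |x u|) := hb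
        _ ≤ |x u|^3 / (1/2) := by
            apply div_le_div_of_nonneg_left (by positivity) (by norm_num) hden
        _ = 2 * |x u|^3 := by ring
      have hxu : x u = (t1 + t2*u) * u := by rw [hx]; ring
      have habs : |x u|^3 = |t1 + t2*u|^3 * |u|^3 := by
        rw [hxu, abs_mul, mul_pow]
      rw [Real.norm_eq_abs, abs_div, abs_of_nonneg (sq_nonneg u)]
      rw [div_le_iff₀ (by positivity : (0:ℝ) < u^2)]
      calc |x u + (x u)^2/2 + Real.log (1 - x u)| ≤ 2 * |x u|^3 := hb2
        _ = 2*|t1 + t2*u|^3 * |u| * u^2 := by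
            rw [habs, abs_of_pos hu0]; ring
    · have : Tendsto (fun u : ℝ => 2*|t1 + t2*u|^3 * |u|) (𝓝 0) (𝓝 (2*|t1 + t2*0|^3 * |0|)) := by
        apply Continuous.tendsto; fun_prop
      simpa using this.mono_left nhdsWithin_le_nhds
  have hA : Tendsto (fun u : ℝ => t2 + (t1 + t2*u)^2/2) (𝓝[>] 0) (𝓝 (t1^2/2 + t2)) := by
    have : Tendsto (fun u : ℝ => t2 + (t1 + t2*u)^2/2) (𝓝 0) (𝓝 (t2 + (t1 + t2*0)^2/2)) := by
      apply Continuous.tendsto; fun_prop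
    have h2 : t2 + (t1 + t2*0)^2/2 = t1^2/2 + t2 := by ring
    rw [h2] at this
    exact this.mono_left nhdsWithin_le_nhds
  have := hA.sub hB
  rw [sub_zero] at this
  apply this.congr'
  filter_upwards [hupos] with u hu0
  have hu : u ≠ 0 := ne_of_gt hu0
  rw [hx]
  field_simp
  ring

lemma main_eval {Ω : Type*} [MeasurableSpace Ω] (P : Measure Ω) [IsProbabilityMeasure P]
    (α0 β0 a b : ℝ) (ha : 0 < a) (hb : 0 < b) (hda : 0 < a + α0) (hdb : 0 < b + β0)
    (X Y : Ω → ℝ) (hX : Measure.map X P = chiSq (a+α0)) (hY : Measure.map Y P = chiSq (b+β0))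
    (hind : IndepFun X Y P) (t1 t2 t3 t4 : ℝ)
    (hsX : t1 * Real.sqrt (b/a) + t2 * (Real.sqrt (b/a))^2 < 1)
    (hsY : t3 * Real.sqrt (b/a) + t4 < 1) :
    Integrable (fun ω => Real.exp ((b / 2) *
        (t1 * ((X ω - a) / Real.sqrt (a * b)) + t2 * (X ω / a) +
          t3 * (Y ω / Real.sqrt (a * b)) + t4 * (Y ω / b)))) P ∧
    (2 / b) * Real.log (∫ ω, Real.exp ((b / 2) *
        (t1 * ((X ω - a) / Real.sqrt (a * b)) + t2 * (X ω / a) +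
          t3 * (Y ω / Real.sqrt (a * b)) + t4 * (Y ω / b))) ∂P) =
      -t1 / Real.sqrt (b/a)
      - (1/(Real.sqrt (b/a))^2 + α0/b) *
          Real.log (1 - (t1 * Real.sqrt (b/a) + t2 * (Real.sqrt (b/a))^2))
      - (1 + β0/b) * Real.log (1 - (t3 * Real.sqrt (b/a) + t4)) := by
  set u := Real.sqrt (b/a) with hu_def
  set S := Real.sqrt (a*b) with hS_def
  have hu0 : 0 < u := Real.sqrt_pos.mpr (by positivity)
  have hS0 : 0 < S := Real.sqrt_pos.mpr (by positivity)
  have hu2 : u^2 = b/a := Real.sq_sqrt (by positivity)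
  have hS2 : S^2 = a*b := Real.sq_sqrt (by positivity)
  have hbS : b/S = u := by
    rw [hS_def, Real.sqrt_mul ha.le b, hu_def, Real.sqrt_div hb.le a,
      div_eq_div_iff (by positivity) (Real.sqrt_pos.mpr ha).ne']
    have hbb := Real.mul_self_sqrt hb.le
    linear_combination (-Real.sqrt a) * hbb
  have haS : a/S = 1/u := by
    rw [hu_def, Real.sqrt_div hb.le a, one_div_div, hS_def, Real.sqrt_mul ha.le b,
      div_eq_div_iff (by positivity) (Real.sqrt_pos.mpr hb).ne']
    have haa := Real.mul_self_sqrt ha.le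
    linear_combination (-Real.sqrt b) * haa
  have hbS2 : (b/S)^2 = b/a := by
    rw [div_pow, hS2, div_eq_div_iff (by positivity) ha.ne']
    ring
  set sX := (t1*u + t2*u^2)/2 with hsX_def
  set sY := (t3*u + t4)/2 with hsY_def
  set c := -(b/2)*(t1*(a/S)) with hc_def
  have hsX' : sX < 1/2 := by rw [hsX_def]; linarith
  have hsY' : sY < 1/2 := by rw [hsY_def]; linarith
  have h1X : (0:ℝ) < 1 - 2*sX := by linarith
  have h1Y : (0:ℝ) < 1 - 2*sY := by linarith
  have hpt : ∀ x y : ℝ, (b / 2) *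
      (t1 * ((x - a) / S) + t2 * (x / a) + t3 * (y / S) + t4 * (y / b)) =
      sX*x + sY*y + c := by
    intro x y
    rw [hsX_def, hsY_def, hc_def, ← hbS, hbS2]
    field_simp
    ring
  have hXae : AEMeasurable X P := by
    by_contra h
    rw [Measure.map_of_not_aemeasurable h] at hX
    exact chiSq_neZero hda hX.symm
  have hYae : AEMeasurable Y P := by
    by_contra h
    rw [Measure.map_of_not_aemeasurable h] at hY
    exact chiSq_neZero hdb hY.symm
  have hgmX : AEStronglyMeasurable (fun x => Real.exp (sX * x)) (Measure.map X P) :=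
    (Real.continuous_exp.comp (continuous_const.mul continuous_id)).aestronglyMeasurable
  have hgmY : AEStronglyMeasurable (fun x => Real.exp (sY * x)) (Measure.map Y P) :=
    (Real.continuous_exp.comp (continuous_const.mul continuous_id)).aestronglyMeasurable
  have IX : Integrable (fun ω => Real.exp (sX * X ω)) P := by
    have h := chiSq_integrable_exp hda hsX'
    rw [← hX] at h
    exact (integrable_map_measure hgmX hXae).mp h
  have IY : Integrable (fun ω => Real.exp (sY * Y ω)) P := by
    have h := chiSq_integrable_exp hdb hsY'
    rw [← hY] at h
    exact (integrable_map_measure hgmY hYae).mp h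
  have hIndE : IndepFun (fun ω => Real.exp (sX * X ω)) (fun ω => Real.exp (sY * Y ω)) P :=
    hind.comp (by fun_prop : Measurable fun x => Real.exp (sX * x))
      (by fun_prop : Measurable fun x => Real.exp (sY * x))
  have Iprod : Integrable (fun ω => Real.exp (sX * X ω) * Real.exp (sY * Y ω)) P :=
    hIndE.integrable_mul IX IY
  have hfun : (fun ω => Real.exp ((b / 2) *
      (t1 * ((X ω - a) / S) + t2 * (X ω / a) + t3 * (Y ω / S) + t4 * (Y ω / b)))) =
      fun ω => Real.exp (sX * X ω) * Real.exp (sY * Y ω) * Real.exp c := by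
    funext ω
    rw [hpt (X ω) (Y ω), Real.exp_add, Real.exp_add]
  constructor
  · rw [hfun]; exact Iprod.mul_const _
  have hAX : ∫ ω, Real.exp (sX * X ω) ∂P = (1 - 2*sX) ^ (-((a+α0)/2)) := by
    rw [← chiSq_integral_exp hda hsX', ← hX, integral_map hXae hgmX]
  have hAY : ∫ ω, Real.exp (sY * Y ω) ∂P = (1 - 2*sY) ^ (-((b+β0)/2)) := by
    rw [← chiSq_integral_exp hdb hsY', ← hY, integral_map hYae hgmY]
  have hint : ∫ ω, Real.exp ((b / 2) *
      (t1 * ((X ω - a) / S) + t2 * (X ω / a) + t3 * (Y ω / S) + t4 * (Y ω / b))) ∂P =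
      (1 - 2*sX) ^ (-((a+α0)/2)) * (1 - 2*sY) ^ (-((b+β0)/2)) * Real.exp c := by
    rw [hfun, integral_mul_const]
    have hm2 : (∫ a, Real.exp (sX * X a) * Real.exp (sY * Y a) ∂P) =
        (∫ ω, Real.exp (sX * X ω) ∂P) * ∫ ω, Real.exp (sY * Y ω) ∂P :=
      hIndE.integral_fun_mul_eq_mul_integral IX.1 IY.1
    rw [hm2, hAX, hAY]
  rw [hint]
  have hposX : (0:ℝ) < (1 - 2*sX) ^ (-((a+α0)/2)) := Real.rpow_pos_of_pos h1X _
  have hposY : (0:ℝ) < (1 - 2*sY) ^ (-((b+β0)/2)) := Real.rpow_pos_of_pos h1Y _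
  rw [Real.log_mul (by positivity) (Real.exp_pos _).ne',
      Real.log_mul hposX.ne' hposY.ne', Real.log_exp,
      Real.log_rpow h1X, Real.log_rpow h1Y]
  have e1 : 1 - 2*sX = 1 - (t1 * u + t2 * u^2) := by rw [hsX_def]; ring
  have e2 : 1 - 2*sY = 1 - (t3 * u + t4) := by rw [hsY_def]; ring
  have hab : a/b = 1/u^2 := by rw [hu2, one_div_div]
  rw [e1, e2, hc_def, haS, ← hab]
  field_simp
  ring

end AuxChiSq

/-- **Convergence of scaled cumulant generating functions (proof of Lemma 4.1).**
For independent `X_n ∼ χ²_{α_n+α₀}`, `Y_n ∼ χ²_{β_n+β₀}` with `α_n, β_n → ∞`, `α_n/β_n → ∞`,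
and `t ∈ ℝ³ × (-∞,1)`, the expectations are eventually finite and
`(2/β_n) log E[exp((β_n/2)⟨t, G⁽ⁿ⁾⟩)] → t₁²/2 + t₂ - log(1 - t₄)`. -/
theorem chiSq_cgf_limit
    (α0 β0 : ℝ) (αs βs : ℕ → ℝ)
    (hαpos : ∀ n, 0 < αs n) (hβpos : ∀ n, 0 < βs n)
    (hdfα : ∀ n, 0 < αs n + α0) (hdfβ : ∀ n, 0 < βs n + β0)
    (hα : Tendsto αs atTop atTop) (hβ : Tendsto βs atTop atTop)
    (hratio : Tendsto (fun n => αs n / βs n) atTop atTop)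
    (Ω : ℕ → Type) [∀ n, MeasurableSpace (Ω n)]
    (P : ∀ n, Measure (Ω n)) (hP : ∀ n, IsProbabilityMeasure (P n))
    (X Y : ∀ n, Ω n → ℝ)
    (hX : ∀ n, Measure.map (X n) (P n) = chiSq (αs n + α0))
    (hY : ∀ n, Measure.map (Y n) (P n) = chiSq (βs n + β0))
    (hindep : ∀ n, IndepFun (X n) (Y n) (P n))
    (t1 t2 t3 t4 : ℝ) (ht4 : t4 < 1) :
    (∀ᶠ n in atTop, Integrable (fun ω => Real.exp ((βs n / 2) *
        (t1 * ((X n ω - αs n) / Real.sqrt (αs n * βs n)) + t2 * (X n ω / αs n) +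
          t3 * (Y n ω / Real.sqrt (αs n * βs n)) + t4 * (Y n ω / βs n)))) (P n)) ∧
    Tendsto (fun n => (2 / βs n) * Real.log (∫ ω, Real.exp ((βs n / 2) *
        (t1 * ((X n ω - αs n) / Real.sqrt (αs n * βs n)) + t2 * (X n ω / αs n) +
          t3 * (Y n ω / Real.sqrt (αs n * βs n)) + t4 * (Y n ω / βs n))) ∂(P n)))
      atTop (𝓝 ((1 / 2) * t1 ^ 2 + t2 - Real.log (1 - t4))) := by
  set u : ℕ → ℝ := fun n => Real.sqrt (βs n / αs n) with hu_def
  have hupos : ∀ n, 0 < u n := fun n => Real.sqrt_pos.mpr (div_pos (hβpos n) (hαpos n))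
  have hba : Tendsto (fun n => βs n / αs n) atTop (𝓝 0) := by
    have h := hratio.inv_tendsto_atTop
    refine h.congr fun n => ?_
    rw [Pi.inv_apply, inv_div]
  have hu0 : Tendsto u atTop (𝓝 0) := by
    have h := (Real.continuous_sqrt.tendsto 0).comp hba
    simpa [hu_def, Function.comp_def] using h
  have huW : Tendsto u atTop (𝓝[>] 0) :=
    tendsto_nhdsWithin_of_tendsto_nhds_of_eventually_within _ hu0
      (Eventually.of_forall fun n => hupos n)
  have hxX : Tendsto (fun n => t1 * u n + t2 * (u n)^2) atTop (𝓝 0) := by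
    have h := (tendsto_const_nhds (x := t1)).mul hu0 |>.add
      ((tendsto_const_nhds (x := t2)).mul (hu0.pow 2))
    simpa using h
  have hxY : Tendsto (fun n => t3 * u n + t4) atTop (𝓝 t4) := by
    have h := (tendsto_const_nhds (x := t3)).mul hu0 |>.add (tendsto_const_nhds (x := t4))
    simpa using h
  have hevX : ∀ᶠ n in atTop, t1 * u n + t2 * (u n)^2 < 1 :=
    hxX.eventually_lt_const one_pos
  have hevY : ∀ᶠ n in atTop, t3 * u n + t4 < 1 := hxY.eventually_lt_const ht4
  have hinv : Tendsto (fun n => (βs n)⁻¹) atTop (𝓝 0) := hβ.inv_tendsto_atTop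
  constructor
  · filter_upwards [hevX, hevY] with n h1 h2
    haveI := hP n
    exact (main_eval (P n) α0 β0 (αs n) (βs n) (hαpos n) (hβpos n) (hdfα n) (hdfβ n)
      (X n) (Y n) (hX n) (hY n) (hindep n) t1 t2 t3 t4 h1 h2).1
  · have l1 : Tendsto (fun n => Real.log (1 - (t1 * u n + t2 * (u n)^2))) atTop
        (𝓝 (Real.log 1)) := by
      have hc : Tendsto (fun n => 1 - (t1 * u n + t2 * (u n)^2)) atTop (𝓝 1) := by
        have h := (tendsto_const_nhds (x := (1:ℝ))).sub hxX
        simpa using h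
      exact ((Real.continuousAt_log one_ne_zero).tendsto).comp hc
    have l2 : Tendsto (fun n => Real.log (1 - (t3 * u n + t4))) atTop
        (𝓝 (Real.log (1 - t4))) := by
      have hc : Tendsto (fun n => 1 - (t3 * u n + t4)) atTop (𝓝 (1 - t4)) :=
        (tendsto_const_nhds (x := (1:ℝ))).sub hxY
      exact ((Real.continuousAt_log (by linarith)).tendsto).comp hc
    have c2 : Tendsto (fun n => α0 * (βs n)⁻¹) atTop (𝓝 (α0 * 0)) :=
      tendsto_const_nhds.mul hinv
    have c3 : Tendsto (fun n => 1 + β0 * (βs n)⁻¹) atTop (𝓝 (1 + β0 * 0)) :=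
      tendsto_const_nhds.add (tendsto_const_nhds.mul hinv)
    have hkey : Tendsto (fun n => -t1/(u n) - (1/(u n)^2) *
        Real.log (1 - (t1 * u n + t2 * (u n)^2))) atTop (𝓝 (t1^2/2 + t2)) :=
      (key_limit t1 t2).comp huW
    have hF : Tendsto (fun n =>
        (-t1 / u n - (1/(u n)^2) * Real.log (1 - (t1 * u n + t2 * (u n)^2)))
        - (α0 * (βs n)⁻¹) * Real.log (1 - (t1 * u n + t2 * (u n)^2))
        - (1 + β0 * (βs n)⁻¹) * Real.log (1 - (t3 * u n + t4)))
        atTop (𝓝 ((t1^2/2 + t2) - (α0 * 0) * Real.log 1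
          - (1 + β0 * 0) * Real.log (1 - t4))) :=
      (hkey.sub (c2.mul l1)).sub (c3.mul l2)
    have hEq : (fun n =>
        (-t1 / u n - (1/(u n)^2) * Real.log (1 - (t1 * u n + t2 * (u n)^2)))
        - (α0 * (βs n)⁻¹) * Real.log (1 - (t1 * u n + t2 * (u n)^2))
        - (1 + β0 * (βs n)⁻¹) * Real.log (1 - (t3 * u n + t4))) =ᶠ[atTop]
        (fun n => (2 / βs n) * Real.log (∫ ω, Real.exp ((βs n / 2) *
          (t1 * ((X n ω - αs n) / Real.sqrt (αs n * βs n)) + t2 * (X n ω / αs n) +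
            t3 * (Y n ω / Real.sqrt (αs n * βs n)) + t4 * (Y n ω / βs n))) ∂(P n))) := by
      filter_upwards [hevX, hevY] with n h1 h2
      haveI := hP n
      rw [(main_eval (P n) α0 β0 (αs n) (βs n) (hαpos n) (hβpos n) (hdfα n) (hdfβ n)
        (X n) (Y n) (hX n) (hY n) (hindep n) t1 t2 t3 t4 h1 h2).2]
      have hbn : βs n ≠ 0 := (hβpos n).ne'
      have hun : Real.sqrt (βs n / αs n) ≠ 0 := (hupos n).ne'
      simp only [hu_def]
      field_simp
      ring
    have hlim := hF.congr' hEq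
    have : (t1^2/2 + t2) - (α0 * 0) * Real.log 1 - (1 + β0 * 0) * Real.log (1 - t4)
        = (1 / 2) * t1 ^ 2 + t2 - Real.log (1 - t4) := by
      rw [Real.log_one]; ring
    rwa [this] at hlim

end
end

section
/- For every ξ≥0 and every integer k≥1, the k-th moment of the signed measure ν_ξ with Lebesgue density (ξ/2π)·x(x²−3)/√(4−x²) on [−2,2] satisfies ∫_{−2}^{2} x^k · (ξ/2π)·x(x²−3)/√(4−x²) dx = ξ·C(k,(k−3)/2) if k is odd and k≥3, and = 0 if k is even or k=1, where C(·,·) is the binomial coefficient. Moreover ν_ξ has total mass zero. -/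
open MeasureTheory ProbabilityTheory Filter Topology Polynomial
open scoped ENNReal NNReal

noncomputable section

namespace NuXiAux

/-- `J n = ∫ x in -2..2, x^n / √(4-x²)`. -/
def J (n : ℕ) : ℝ := ∫ x in (-2:ℝ)..2, x ^ n / Real.sqrt (4 - x ^ 2)

lemma Jint (n : ℕ) :
    IntervalIntegrable (fun x : ℝ => x ^ n / Real.sqrt (4 - x ^ 2)) volume (-2) 2 := by
  have meas : ∀ a b : ℝ, AEStronglyMeasurable (fun x : ℝ => x ^ n / Real.sqrt (4 - x ^ 2))
      (volume.restrict (Set.uIoc a b)) := by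
    intro a b
    exact ((measurable_id.pow_const n).div
      ((measurable_const.sub (measurable_id.pow_const 2)).sqrt)).aestronglyMeasurable
  have base : IntervalIntegrable (fun x : ℝ => x ^ n / Real.sqrt (4 - x ^ 2)) volume 0 2 := by
    have hg : IntervalIntegrable
        (fun x : ℝ => (2 ^ n / Real.sqrt 2) * (2 - x) ^ (-(1/2) : ℝ)) volume 0 2 := by
      have h0 : IntervalIntegrable (fun x : ℝ => x ^ (-(1/2) : ℝ)) volume 0 2 :=
        intervalIntegral.intervalIntegrable_rpow' (by norm_num)
      have h1 := (h0.comp_sub_left 2).symm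
      norm_num at h1
      exact h1.const_mul _
    refine hg.mono_fun' (meas 0 2) ?_
    have huIoc : Set.uIoc (0:ℝ) 2 = Set.Ioc (0:ℝ) 2 := Set.uIoc_of_le (by norm_num)
    rw [huIoc]
    filter_upwards [ae_restrict_mem measurableSet_Ioc] with x hx
    obtain ⟨hx0, hx2⟩ := hx
    rcases eq_or_lt_of_le hx2 with rfl | hlt
    · norm_num [Real.zero_rpow]
    · have h4 : (0:ℝ) < 4 - x ^ 2 := by nlinarith
      have hs : 0 < Real.sqrt (4 - x ^ 2) := Real.sqrt_pos.2 h4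
      have hrw : (2 - x) ^ (-(1/2) : ℝ) = (Real.sqrt (2 - x))⁻¹ := by
        rw [Real.rpow_neg (by linarith), Real.sqrt_eq_rpow]
      have hb : Real.sqrt 2 * Real.sqrt (2 - x) ≤ Real.sqrt (4 - x ^ 2) := by
        rw [← Real.sqrt_mul (by norm_num)]
        exact Real.sqrt_le_sqrt (by nlinarith)
      have hbpos : 0 < Real.sqrt 2 * Real.sqrt (2 - x) := by
        apply mul_pos (Real.sqrt_pos.2 (by norm_num)) (Real.sqrt_pos.2 (by linarith))
      have key : x ^ n / Real.sqrt (4 - x ^ 2) ≤ 2 ^ n / Real.sqrt 2 * (2 - x) ^ (-(1/2) : ℝ) := by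
        rw [hrw, show (2:ℝ) ^ n / Real.sqrt 2 * (Real.sqrt (2 - x))⁻¹
          = 2 ^ n / (Real.sqrt 2 * Real.sqrt (2 - x)) by field_simp]
        exact div_le_div₀ (by positivity) (pow_le_pow_left₀ hx0.le hx2 n) hbpos hb
      have hnn : 0 ≤ x ^ n / Real.sqrt (4 - x ^ 2) := by positivity
      rw [Real.norm_eq_abs, abs_of_nonneg hnn]
      exact key
  have hneg : IntervalIntegrable (fun x : ℝ => x ^ n / Real.sqrt (4 - x ^ 2)) volume (-2) 0 := by
    have h2 := ((IntervalIntegrable.iff_comp_neg (f := fun x : ℝ => x ^ n / Real.sqrt (4 - x ^ 2)) (by simp)).mp base).symm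
    norm_num at h2
    have h3 := h2.const_mul ((-1 : ℝ) ^ n)
    have : (fun x : ℝ => (-1:ℝ) ^ n * ((-x) ^ n / Real.sqrt (4 - x ^ 2)))
        = fun x : ℝ => x ^ n / Real.sqrt (4 - x ^ 2) := by
      funext x
      have hpow : ((-1:ℝ)) ^ n * (-x) ^ n = x ^ n := by rw [← mul_pow]; norm_num
      rw [← mul_div_assoc, hpow]
    rwa [this] at h3
  exact hneg.trans base

lemma ftc {F f : ℝ → ℝ} (hc : ContinuousOn F (Set.Icc (-2) 2))
    (hd : ∀ x ∈ Set.Ioo (-2:ℝ) 2, HasDerivAt F (f x) x)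
    (hi : IntervalIntegrable f volume (-2) 2) :
    ∫ x in (-2:ℝ)..2, f x = F 2 - F (-2) :=
  intervalIntegral.integral_eq_sub_of_hasDeriv_right_of_le (by norm_num) hc
    (fun x hx => (hd x hx).hasDerivWithinAt) hi

lemma sqrt_four : Real.sqrt 4 = 2 := by
  rw [show (4:ℝ) = 2 ^ 2 by norm_num, Real.sqrt_sq (by norm_num)]

lemma Jzero : J 0 = Real.pi := by
  rw [J]
  have := ftc (F := fun x => Real.arcsin (x / 2)) (f := fun x => x ^ 0 / Real.sqrt (4 - x ^ 2))
    (Real.continuous_arcsin.comp (continuous_id.div_const 2)).continuousOn ?_ (Jint 0)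
  · rw [this]
    norm_num [Real.arcsin_one, Real.arcsin_neg_one]
  · intro x hx
    obtain ⟨hx1, hx2⟩ := hx
    have h1 : x / 2 ≠ -1 := by intro h; rw [div_eq_iff (by norm_num : (2:ℝ) ≠ 0)] at h; linarith
    have h2 : x / 2 ≠ 1 := by intro h; rw [div_eq_iff (by norm_num : (2:ℝ) ≠ 0)] at h; linarith
    have hin : HasDerivAt (fun y : ℝ => y / 2) (1/2) x := by
      simpa using (hasDerivAt_id x).div_const 2
    have := (Real.hasDerivAt_arcsin h1 h2).comp x hin
    refine this.congr_deriv (Eq.symm ?_)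
    have h4 : (0:ℝ) < 4 - x ^ 2 := by nlinarith
    have : 1 - (x / 2) ^ 2 = (4 - x ^ 2) / 4 := by ring
    rw [this, Real.sqrt_div (by linarith) 4, sqrt_four]
    have hs : 0 < Real.sqrt (4 - x ^ 2) := Real.sqrt_pos.2 h4
    field_simp

lemma Jrec (n : ℕ) : ((n:ℝ)+2) * J (n+2) = 4*((n:ℝ)+1) * J n := by
  have key : ∫ x in (-2:ℝ)..2,
      (4*((n:ℝ)+1) * (x ^ n / Real.sqrt (4 - x ^ 2))
        - ((n:ℝ)+2) * (x ^ (n+2) / Real.sqrt (4 - x ^ 2))) = 0 := by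
    have := ftc (F := fun x => x ^ (n+1) * Real.sqrt (4 - x ^ 2))
      (f := fun x => 4*((n:ℝ)+1) * (x ^ n / Real.sqrt (4 - x ^ 2))
        - ((n:ℝ)+2) * (x ^ (n+2) / Real.sqrt (4 - x ^ 2)))
      ?_ ?_ (((Jint n).const_mul _).sub ((Jint (n+2)).const_mul _))
    · rw [this]
      norm_num
    · exact ((continuous_pow (n+1)).mul
        ((continuous_const.sub (continuous_pow 2)).sqrt)).continuousOn
    · intro x hx
      obtain ⟨hx1, hx2⟩ := hx
      have h4 : (0:ℝ) < 4 - x ^ 2 := by nlinarith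
      have hs : 0 < Real.sqrt (4 - x ^ 2) := Real.sqrt_pos.2 h4
      have hs2 : Real.sqrt (4 - x ^ 2) ^ 2 = 4 - x ^ 2 := Real.sq_sqrt h4.le
      have hin : HasDerivAt (fun y : ℝ => 4 - y ^ 2) (-(2*x)) x := by
        simpa using ((hasDerivAt_pow 2 x).const_sub 4)
      have hsd : HasDerivAt (fun y : ℝ => Real.sqrt (4 - y ^ 2))
          (-(2*x) / (2 * Real.sqrt (4 - x ^ 2))) x := hin.sqrt h4.ne'
      have := (hasDerivAt_pow (n+1) x).mul hsd
      refine this.congr_deriv (Eq.symm ?_)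
      have hxne : Real.sqrt (4 - x ^ 2) ≠ 0 := hs.ne'
      rw [show n + 1 - 1 = n from rfl]
      push_cast
      refine mul_right_cancel₀ hxne ?_
      linear_combination (4*((n:ℝ)+1)*x^n - ((n:ℝ)+1)*x^(n+2)) * inv_mul_cancel₀ hxne
        - ((n:ℝ)+1)*x^n * hs2
  rw [intervalIntegral.integral_sub ((Jint n).const_mul _) ((Jint (n+2)).const_mul _),
    intervalIntegral.integral_const_mul, intervalIntegral.integral_const_mul] at key
  have : 4*((n:ℝ)+1) * J n - ((n:ℝ)+2) * J (n+2) = 0 := key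
  linarith

lemma Jodd (m : ℕ) : J (2*m+1) = 0 := by
  have h := intervalIntegral.integral_comp_neg (a := (-2:ℝ)) (b := 2)
    (fun x => x ^ (2*m+1) / Real.sqrt (4 - x ^ 2))
  norm_num at h
  have hodd : ∀ x : ℝ, (-x) ^ (2*m+1) / Real.sqrt (4 - x ^ 2)
      = -(x ^ (2*m+1) / Real.sqrt (4 - x ^ 2)) := by
    intro x
    rw [Odd.neg_pow ⟨m, by ring⟩, neg_div]
  rw [intervalIntegral.integral_congr (fun x _ => hodd x), intervalIntegral.integral_neg] at h
  have : -J (2*m+1) = J (2*m+1) := h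
  linarith

lemma chooseRecR (m : ℕ) :
    ((2*m+2 : ℕ) : ℝ) * ((2*m+2).choose (m+1) : ℝ)
      = 4 * ((2*m+1 : ℕ) : ℝ) * ((2*m).choose m : ℝ) := by
  have h1 := Nat.add_one_mul_choose_eq (2*m+1) m
  have h2 := Nat.add_one_mul_choose_eq (2*m) m
  have h3 := Nat.choose_symm_half m
  rw [h3] at h2
  rw [show 2*m+1+1 = 2*m+2 by ring] at h1
  have H1 := congrArg (Nat.cast : ℕ → ℝ) h1
  have H2 := congrArg (Nat.cast : ℕ → ℝ) h2
  push_cast at H1 H2 ⊢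
  refine mul_left_cancel₀ (show ((m:ℝ)+1) ≠ 0 by positivity) ?_
  linear_combination -(2*(m:ℝ)+2) * H1 - 4*((m:ℝ)+1) * H2

lemma Jeven (m : ℕ) : J (2*m) = Real.pi * ((2*m).choose m : ℝ) := by
  induction m with
  | zero => simpa using Jzero
  | succ i ih =>
    have hrec := Jrec (2*i)
    have hC := chooseRecR i
    have hne : ((2*i:ℝ)+2) ≠ 0 := by positivity
    have hidx : 2*(i+1) = 2*i+2 := by ring
    rw [hidx]
    refine mul_left_cancel₀ hne ?_
    push_cast at hrec hC
    rw [hrec, ih]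
    linear_combination -Real.pi * hC

lemma choosePascal (j : ℕ) :
    (2*j+6).choose (j+3) = 3 * (2*j+4).choose (j+2) + 2 * (2*j+3).choose j := by
  have pascal : ∀ n k : ℕ, (n+1).choose (k+1) = n.choose k + n.choose (k+1) :=
    fun n k => Nat.choose_succ_succ n k
  have hb : (2*j+3).choose (j+2) = (2*j+3).choose (j+1) := by
    have := Nat.choose_symm_half (j+1)
    rw [show 2*(j+1)+1 = 2*j+3 by ring, show j+1+1 = j+2 by ring] at this
    exact this
  have e1 : (2*j+4).choose (j+2) = (2*j+3).choose (j+1) + (2*j+3).choose (j+2) := by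
    rw [show 2*j+4 = (2*j+3)+1 by ring, show j+2 = (j+1)+1 by ring]
    exact pascal _ _
  have e2 : (2*j+4).choose (j+1) = (2*j+3).choose j + (2*j+3).choose (j+1) := by
    rw [show 2*j+4 = (2*j+3)+1 by ring, show j+1 = j+1 by ring]
    exact pascal _ _
  have e3 : (2*j+4).choose (j+3) = (2*j+4).choose (j+1) := by
    have := Nat.choose_symm (show j+3 ≤ 2*j+4 by omega)
    rw [show 2*j+4-(j+3) = j+1 by omega] at this
    exact this.symm
  have e4 : (2*j+5).choose (j+2) = (2*j+4).choose (j+1) + (2*j+4).choose (j+2) := by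
    rw [show 2*j+5 = (2*j+4)+1 by ring, show j+2 = (j+1)+1 by ring]
    exact pascal _ _
  have e5 : (2*j+5).choose (j+3) = (2*j+4).choose (j+2) + (2*j+4).choose (j+3) := by
    rw [show 2*j+5 = (2*j+4)+1 by ring, show j+3 = (j+2)+1 by ring]
    exact pascal _ _
  have e6 : (2*j+6).choose (j+3) = (2*j+5).choose (j+2) + (2*j+5).choose (j+3) := by
    rw [show 2*j+6 = (2*j+5)+1 by ring, show j+3 = (j+2)+1 by ring]
    exact pascal _ _
  omega

lemma momentEq (c : ℝ) (k : ℕ) :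
    (∫ x in Set.Icc (-2:ℝ) 2,
        x ^ k * (c * (x * (x ^ 2 - 3) / Real.sqrt (4 - x ^ 2))))
      = c * J (k+3) - 3*c * J (k+1) := by
  rw [MeasureTheory.integral_Icc_eq_integral_Ioc,
    ← intervalIntegral.integral_of_le (show (-2:ℝ) ≤ 2 by norm_num)]
  have hcg : ∀ x : ℝ, x ^ k * (c * (x * (x ^ 2 - 3) / Real.sqrt (4 - x ^ 2)))
      = c * (x ^ (k+3) / Real.sqrt (4 - x ^ 2)) - 3*c * (x ^ (k+1) / Real.sqrt (4 - x ^ 2)) := by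
    intro x
    ring
  rw [intervalIntegral.integral_congr (fun x _ => hcg x),
    intervalIntegral.integral_sub ((Jint (k+3)).const_mul c) ((Jint (k+1)).const_mul (3*c)),
    intervalIntegral.integral_const_mul, intervalIntegral.integral_const_mul]
  rfl

end NuXiAux

open NuXiAux in
/-- **Moments of the signed measure `ν_ξ` (equation (9)).**
For the signed measure `ν_ξ` with Lebesgue density `(ξ/2π)·x(x²-3)/√(4-x²)` on `[-2,2]`,
`m_k(ν_ξ) = ξ·C(k,(k-3)/2)` if `k` is odd and `k ≥ 3`, and `m_k(ν_ξ) = 0` if `k` is even or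
`k = 1`; moreover `ν_ξ` has total mass zero. -/
theorem nuXi_moments (ξ : ℝ) (hξ : 0 ≤ ξ) (k : ℕ) (hk : 1 ≤ k) :
    (∫ x in Set.Icc (-2 : ℝ) 2,
        x ^ k * (ξ / (2 * Real.pi) * (x * (x ^ 2 - 3) / Real.sqrt (4 - x ^ 2)))) =
      (if Odd k ∧ 3 ≤ k then ξ * (k.choose ((k - 3) / 2)) else 0) ∧
    (∫ x in Set.Icc (-2 : ℝ) 2,
        (ξ / (2 * Real.pi) * (x * (x ^ 2 - 3) / Real.sqrt (4 - x ^ 2)))) = 0 := by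
  constructor
  · rw [momentEq (ξ / (2 * Real.pi)) k]
    rcases Nat.even_or_odd k with he | ho
    · obtain ⟨m, rfl⟩ := he
      rw [if_neg (fun hc => (Nat.not_odd_iff_even.mpr ⟨m, rfl⟩) hc.1)]
      rw [show m + m + 3 = 2*(m+1)+1 by ring, show m + m + 1 = 2*m+1 by ring, Jodd, Jodd]
      ring
    · obtain ⟨m, rfl⟩ := ho
      rw [show 2*m+1+3 = 2*(m+2) by ring, show 2*m+1+1 = 2*(m+1) by ring, Jeven, Jeven]
      rcases m with _ | j
      · rw [if_neg (by omega)]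
        norm_num [Nat.choose]
        ring
      · rw [if_pos ⟨⟨j+1, by ring⟩, by omega⟩]
        rw [show (2*(j+1)+1-3)/2 = j by omega]
        have hP := choosePascal j
        have HP := congrArg (Nat.cast : ℕ → ℝ) hP
        push_cast at HP
        rw [show 2*((j+1)+2) = 2*j+6 by ring, show (j+1)+2 = j+3 by ring,
          show 2*((j+1)+1) = 2*j+4 by ring, show (j+1)+1 = j+2 by ring,
          show 2*(j+1)+1 = 2*j+3 by ring]
        rw [HP]
        have hpi : Real.pi ≠ 0 := Real.pi_ne_zero
        field_simp
        ring
  · rw [show (fun x : ℝ => ξ / (2 * Real.pi) * (x * (x ^ 2 - 3) / Real.sqrt (4 - x ^ 2)))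
      = fun x : ℝ => x ^ 0 * (ξ / (2 * Real.pi) * (x * (x ^ 2 - 3) / Real.sqrt (4 - x ^ 2)))
      by funext x; rw [pow_zero, one_mul]]
    rw [momentEq (ξ / (2 * Real.pi)) 0]
    rw [show (0:ℕ) + 3 = 2*1+1 by ring, show (0:ℕ) + 1 = 2*0+1 by ring, Jodd, Jodd]
    ring

end
end
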